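/- For probability vectors p, p' on a finite set of size n with all coordinates bounded below by ν > 0, the centered logits θ_a = log p_a − (1/n)∑_b log p_b and θ'_a defined analogously satisfy ‖θ − θ'‖_∞ ≤ (2/ν)‖p − p'‖_1. -/

import Mathlib

open Finset

lemma log_lip_aux {ν x y : ℝ} (hν : 0 < ν) (hx : ν ≤ x) (hy : ν ≤ y) :
    Real.log x - Real.log y ≤ |x - y| / ν := by
  rcases le_total x y with h | h
  · have hlog : Real.log x ≤ Real.log y := Real.log_le_log (lt_of_lt_of_le hν hx) h
    have : Real.log x - Real.log y ≤ 0 := by linarith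
    exact this.trans (div_nonneg (abs_nonneg _) hν.le)
  · have hy0 : 0 < y := lt_of_lt_of_le hν hy
    have hx0 : 0 < x := lt_of_lt_of_le hν hx
    calc Real.log x - Real.log y = Real.log (x / y) := by
          rw [Real.log_div hx0.ne' hy0.ne']
      _ ≤ x / y - 1 := Real.log_le_sub_one_of_pos (div_pos hx0 hy0)
      _ = (x - y) / y := by field_simp
      _ ≤ (x - y) / ν := by gcongr
      _ ≤ |x - y| / ν := by gcongr; exact le_abs_self _

lemma log_lip {ν x y : ℝ} (hν : 0 < ν) (hx : ν ≤ x) (hy : ν ≤ y) :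
    |Real.log x - Real.log y| ≤ |x - y| / ν := by
  rw [abs_sub_le_iff]
  refine ⟨log_lip_aux hν hx hy, ?_⟩
  rw [abs_sub_comm]
  exact log_lip_aux hν hy hx

/-- For probability vectors p, p' on a finite set of size n with all
coordinates ≥ ν > 0, the centered logits θ_a = log p_a − (1/n)∑_b log p_b satisfy
‖θ − θ'‖_∞ ≤ (2/ν) ‖p − p'‖₁. -/
theorem centered_logits_lipschitz (n : ℕ) [NeZero n] (ν : ℝ) (hν : 0 < ν) (hν1 : ν ≤ 1)
    (p p' : Fin n → ℝ)
    (hp : ∀ a, ν ≤ p a) (hp' : ∀ a, ν ≤ p' a)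
    (hpsum : ∑ a, p a = 1) (hp'sum : ∑ a, p' a = 1) :
    ∀ a : Fin n,
      |(Real.log (p a) - (1 / n) * ∑ b, Real.log (p b))
        - (Real.log (p' a) - (1 / n) * ∑ b, Real.log (p' b))|
      ≤ (2 / ν) * ∑ b, |p b - p' b| := by
  intro a
  set S := ∑ b, |p b - p' b| with hS
  have hS0 : 0 ≤ S := Finset.sum_nonneg fun b _ => abs_nonneg _
  have hn1 : (1 : ℝ) ≤ n := by
    exact_mod_cast Nat.one_le_iff_ne_zero.mpr (NeZero.ne n)
  have hn0 : (0 : ℝ) < n := by linarith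
  -- bound each single difference
  have hsingle : ∀ b, |Real.log (p b) - Real.log (p' b)| ≤ |p b - p' b| / ν :=
    fun b => log_lip hν (hp b) (hp' b)
  have h1 : |Real.log (p a) - Real.log (p' a)| ≤ S / ν := by
    refine (hsingle a).trans ?_
    gcongr
    exact Finset.single_le_sum (f := fun b => |p b - p' b|)
      (fun b _ => abs_nonneg _) (Finset.mem_univ a)
  have h2 : |(1 / n : ℝ) * (∑ b, Real.log (p b) - ∑ b, Real.log (p' b))| ≤ S / ν := by
    rw [abs_mul, ← Finset.sum_sub_distrib]
    have habs : |∑ b, (Real.log (p b) - Real.log (p' b))|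
        ≤ ∑ b, (|p b - p' b| / ν) :=
      (Finset.abs_sum_le_sum_abs _ _).trans
        (Finset.sum_le_sum fun b _ => hsingle b)
    have hsum : ∑ b, (|p b - p' b| / ν) = S / ν := by
      rw [← Finset.sum_div]
    have h1n : |(1 / n : ℝ)| ≤ 1 := by
      rw [abs_of_nonneg (by positivity)]
      rw [div_le_one hn0]; exact hn1
    calc |(1 / n : ℝ)| * |∑ b, (Real.log (p b) - Real.log (p' b))|
        ≤ 1 * (S / ν) := by
          apply mul_le_mul h1n (habs.trans_eq hsum) (abs_nonneg _) zero_le_one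
      _ = S / ν := one_mul _
  calc |(Real.log (p a) - (1 / n) * ∑ b, Real.log (p b))
        - (Real.log (p' a) - (1 / n) * ∑ b, Real.log (p' b))|
      = |(Real.log (p a) - Real.log (p' a))
        - (1 / n) * (∑ b, Real.log (p b) - ∑ b, Real.log (p' b))| := by ring_nf
    _ ≤ |Real.log (p a) - Real.log (p' a)|
        + |(1 / n : ℝ) * (∑ b, Real.log (p b) - ∑ b, Real.log (p' b))| := abs_sub _ _
    _ ≤ S / ν + S / ν := add_le_add h1 h2
    _ = (2 / ν) * S := by ring
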